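/- Fix N > 0 and |h₀| ≠ |h₁| (both nonnegative). Then lim_{γ→∞} Q(√(N/2) |√(|h₀|²γ + 1) − √(|h₁|²γ + 1)|) = 0. Moreover |√(|h₀|²γ + 1) − √(|h₁|²γ + 1)| / √γ → ||h₀| − |h₁|| as γ → ∞, so the BER is asymptotically Q(√(Nγ/2) ||h₀| − |h₁||). -/

import Mathlib

open Real MeasureTheory Filter

/-- The Gaussian Q-function. -/
noncomputable def gaussQ (x : ℝ) : ℝ :=
  ∫ t in Set.Ioi x, (2 * Real.pi) ^ (-(1:ℝ)/2) * Real.exp (-t ^ 2 / 2)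

lemma gaussQ_tendsto_zero : Tendsto gaussQ atTop (nhds 0) := by
  set f : ℝ → ℝ := fun t => (2 * Real.pi) ^ (-(1:ℝ)/2) * Real.exp (-t ^ 2 / 2) with hfdef
  have hf : Integrable f := by
    have h1 : Integrable (fun t : ℝ => Real.exp (-(1/2 : ℝ) * t ^ 2)) :=
      integrable_exp_neg_mul_sq (by norm_num)
    have : f = fun t : ℝ => (2 * Real.pi) ^ (-(1:ℝ)/2) * Real.exp (-(1/2 : ℝ) * t ^ 2) := by
      funext t; simp only [hfdef]; ring_nf
    rw [this]; exact h1.const_mul _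
  have key : Tendsto (fun x : ℝ => ∫ t in Set.Iic x, f t) atTop (nhds (∫ t, f t)) :=
    (aecover_Iic tendsto_id).integral_tendsto_of_countably_generated hf
  have heq : ∀ x : ℝ, gaussQ x = (∫ t, f t) - ∫ t in Set.Iic x, f t := by
    intro x
    have := integral_add_compl (measurableSet_Iic (a := x)) hf
    rw [Set.compl_Iic] at this
    have h2 : gaussQ x = ∫ t in Set.Ioi x, f t := rfl
    linarith
  have : Tendsto (fun x : ℝ => (∫ t, f t) - ∫ t in Set.Iic x, f t) atTop (nhds 0) := by
    simpa using (tendsto_const_nhds (x := ∫ t, f t)).sub key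
  exact this.congr (fun x => (heq x).symm)

/-- No error floor with the PSK ambient source: the BER tends to `0` as the SNR `γ → ∞`,
and `|√(|h₀|²γ+1) − √(|h₁|²γ+1)|/√γ → ||h₀| − |h₁||`. -/
theorem stmt15 (h0 h1 : ℝ) (hh0 : 0 ≤ h0) (hh1 : 0 ≤ h1) (hne : h0 ≠ h1)
    (N : ℝ) (hN : 0 < N) :
    Tendsto (fun γ : ℝ =>
        gaussQ (Real.sqrt (N / 2) * |Real.sqrt (h0 ^ 2 * γ + 1) - Real.sqrt (h1 ^ 2 * γ + 1)|))
      atTop (nhds 0) ∧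
    Tendsto (fun γ : ℝ =>
        |Real.sqrt (h0 ^ 2 * γ + 1) - Real.sqrt (h1 ^ 2 * γ + 1)| / Real.sqrt γ)
      atTop (nhds |h0 - h1|) := by
  -- eventual factorization
  have hfac : ∀ γ : ℝ, 0 < γ →
      |Real.sqrt (h0 ^ 2 * γ + 1) - Real.sqrt (h1 ^ 2 * γ + 1)|
        = Real.sqrt γ * |Real.sqrt (h0 ^ 2 + γ⁻¹) - Real.sqrt (h1 ^ 2 + γ⁻¹)| := by
    intro γ hγ
    have e0 : h0 ^ 2 * γ + 1 = γ * (h0 ^ 2 + γ⁻¹) := by field_simp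
    have e1 : h1 ^ 2 * γ + 1 = γ * (h1 ^ 2 + γ⁻¹) := by field_simp
    rw [e0, e1, Real.sqrt_mul hγ.le, Real.sqrt_mul hγ.le, ← mul_sub, abs_mul,
      abs_of_pos (Real.sqrt_pos.mpr hγ)]
  have hF : Tendsto (fun γ : ℝ => |Real.sqrt (h0 ^ 2 + γ⁻¹) - Real.sqrt (h1 ^ 2 + γ⁻¹)|)
      atTop (nhds |h0 - h1|) := by
    have hc : Continuous (fun u : ℝ => |Real.sqrt (h0 ^ 2 + u) - Real.sqrt (h1 ^ 2 + u)|) := by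
      continuity
    have := (hc.tendsto 0).comp tendsto_inv_atTop_zero
    simpa [Function.comp_def, Real.sqrt_sq hh0, Real.sqrt_sq hh1] using this
  have part2 : Tendsto (fun γ : ℝ =>
      |Real.sqrt (h0 ^ 2 * γ + 1) - Real.sqrt (h1 ^ 2 * γ + 1)| / Real.sqrt γ)
      atTop (nhds |h0 - h1|) := by
    apply hF.congr'
    filter_upwards [eventually_gt_atTop (0 : ℝ)] with γ hγ
    rw [hfac γ hγ, mul_div_cancel_left₀ _ (Real.sqrt_pos.mpr hγ).ne']
  refine ⟨?_, part2⟩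
  have habs : Tendsto (fun γ : ℝ =>
      |Real.sqrt (h0 ^ 2 * γ + 1) - Real.sqrt (h1 ^ 2 * γ + 1)|) atTop atTop := by
    have hpos : 0 < |h0 - h1| := abs_pos.mpr (sub_ne_zero.mpr hne)
    have hsq : Tendsto Real.sqrt atTop atTop := by
      apply tendsto_atTop_atTop_of_monotone (fun a b h => Real.sqrt_le_sqrt h)
      exact fun b => ⟨b ^ 2, by rw [Real.sqrt_sq_eq_abs]; exact le_abs_self b⟩
    exact ((hsq.atTop_mul_pos hpos hF).congr'
      (by filter_upwards [eventually_gt_atTop (0 : ℝ)] with γ hγ using (hfac γ hγ).symm))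
  have harg : Tendsto (fun γ : ℝ =>
      Real.sqrt (N / 2) * |Real.sqrt (h0 ^ 2 * γ + 1) - Real.sqrt (h1 ^ 2 * γ + 1)|)
      atTop atTop :=
    habs.const_mul_atTop (Real.sqrt_pos.mpr (by linarith))
  exact gaussQ_tendsto_zero.comp harg
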